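/- arXiv:2406.17952 — 2 statements merged into one kernel-verified Lean document; each statement's English description precedes it below -/
import Mathlib

section
/- Let Σ_P, Σ_Q be symmetric positive definite and set A = Σ_Q^{-1/2}Σ_P Σ_Q^{-1/2}. If ‖A − I‖_F < 1, then (1/2)log(|Σ_Q|/|Σ_P|) + (1/2)tr(Σ_Q^{-1}Σ_P − I) = (1/4)‖A − I‖_F² + R, where |R| ≤ Σ_{k≥3} ‖A−I‖_F^k / k. -/
open Matrix MeasureTheory

open scoped ComplexOrder in
/-- The positive semidefinite square root (removed from Mathlib; old definition restored). -/
noncomputable def Matrix.PosSemidef.sqrt {n : Type*} [Fintype n] [DecidableEq n] {𝕜 : Type*} [RCLike 𝕜]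
    {A : Matrix n n 𝕜} (hA : A.PosSemidef) : Matrix n n 𝕜 :=
  hA.1.eigenvectorUnitary.1 * diagonal ((↑) ∘ (√·) ∘ hA.1.eigenvalues) *
  (star hA.1.eigenvectorUnitary : Matrix n n 𝕜)

/-- Frobenius norm `‖A‖_F = √(tr (Aᵀ A))`. -/
noncomputable def frob {d : ℕ} (A : Matrix (Fin d) (Fin d) ℝ) : ℝ :=
  Real.sqrt (Matrix.trace (Aᵀ * A))

lemma log_series' {x : ℝ} (hx : |x| < 1) :
    HasSum (fun n : ℕ => (-x) ^ (n + 3) / (n + 3)) (x - x^2/2 - Real.log (1 + x)) := by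
  have h := Real.hasSum_pow_div_log_of_abs_lt_one (x := -x) (by rwa [abs_neg])
  have h2 := (hasSum_nat_add_iff' (f := fun n : ℕ => (-x) ^ (n + 1) / (n + 1)) 2).2 h
  rw [Finset.sum_range_succ, Finset.sum_range_succ, Finset.sum_range_zero, sub_neg_eq_add] at h2
  convert h2 using 1
  · rfl
  · funext n; push_cast; ring_nf
  · norm_num; ring

lemma traceConjA {d : ℕ} (U : Matrix.unitaryGroup (Fin d) ℝ) (f : Fin d → ℝ) :
    Matrix.trace ((U : Matrix (Fin d) (Fin d) ℝ) * diagonal f * star (U : Matrix (Fin d) (Fin d) ℝ))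
      = ∑ i, f i := by
  rw [Matrix.trace_mul_cycle, Unitary.coe_star_mul_self, Matrix.one_mul, Matrix.trace_diagonal]

lemma conjMulA {d : ℕ} (U : Matrix.unitaryGroup (Fin d) ℝ) (f g : Fin d → ℝ) :
    ((U : Matrix (Fin d) (Fin d) ℝ) * diagonal f * star (U : Matrix (Fin d) (Fin d) ℝ)) *
      ((U : Matrix (Fin d) (Fin d) ℝ) * diagonal g * star (U : Matrix (Fin d) (Fin d) ℝ))
    = (U : Matrix (Fin d) (Fin d) ℝ) * diagonal (fun i => f i * g i) *
        star (U : Matrix (Fin d) (Fin d) ℝ) := by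
  have h1 : (star (U : Matrix (Fin d) (Fin d) ℝ)) * (U : Matrix (Fin d) (Fin d) ℝ) = 1 :=
    Unitary.coe_star_mul_self U
  calc ((U : Matrix (Fin d) (Fin d) ℝ) * diagonal f * star (U : Matrix (Fin d) (Fin d) ℝ)) *
      ((U : Matrix (Fin d) (Fin d) ℝ) * diagonal g * star (U : Matrix (Fin d) (Fin d) ℝ))
      = (U : Matrix (Fin d) (Fin d) ℝ) * (diagonal f *
        ((star (U : Matrix (Fin d) (Fin d) ℝ)) * (U : Matrix (Fin d) (Fin d) ℝ)) *
        diagonal g) * star (U : Matrix (Fin d) (Fin d) ℝ) := by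
        simp only [Matrix.mul_assoc]
    _ = (U : Matrix (Fin d) (Fin d) ℝ) * diagonal (fun i => f i * g i) *
        star (U : Matrix (Fin d) (Fin d) ℝ) := by
        rw [h1, Matrix.mul_one, Matrix.diagonal_mul_diagonal]

theorem stmt6 {d : ℕ} (SP SQ : Matrix (Fin d) (Fin d) ℝ)
    (hP : SP.PosDef) (hQ : SQ.PosDef)
    (h : frob ((hQ.posSemidef.sqrt)⁻¹ * SP * (hQ.posSemidef.sqrt)⁻¹ - 1) < 1) :
    ∃ R : ℝ,
      (1/2) * Real.log (SQ.det / SP.det) + (1/2) * Matrix.trace (SQ⁻¹ * SP - 1)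
          = (1/4) * frob ((hQ.posSemidef.sqrt)⁻¹ * SP * (hQ.posSemidef.sqrt)⁻¹ - 1) ^ 2 + R
        ∧ |R| ≤ ∑' k : ℕ,
            frob ((hQ.posSemidef.sqrt)⁻¹ * SP * (hQ.posSemidef.sqrt)⁻¹ - 1) ^ (k + 3)
              / (k + 3 : ℝ) := by
  classical
  set S : Matrix (Fin d) (Fin d) ℝ := hQ.posSemidef.sqrt with hSdef
  set M : Matrix (Fin d) (Fin d) ℝ := S⁻¹ * SP * S⁻¹ with hMdef
  have hS : S.IsHermitian := by
    rw [Matrix.IsHermitian, hSdef, Matrix.PosSemidef.sqrt, conjTranspose_mul, conjTranspose_mul,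
      Matrix.star_eq_conjTranspose, conjTranspose_conjTranspose, diagonal_conjTranspose]
    simp [Matrix.mul_assoc]
  have hSinv : (S⁻¹).IsHermitian := hS.inv
  have hM : M.IsHermitian := by
    simp only [Matrix.IsHermitian, hMdef, conjTranspose_mul, hSinv.eq, hP.1.eq, Matrix.mul_assoc]
  set μ : Fin d → ℝ := hM.eigenvalues with hμdef
  set U := hM.eigenvectorUnitary with hUdef
  have spec : M = (U : Matrix (Fin d) (Fin d) ℝ) * diagonal μ *
      star (U : Matrix (Fin d) (Fin d) ℝ) := by
    have := hM.spectral_theorem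
    simpa using this
  have hE : M - 1 = (U : Matrix (Fin d) (Fin d) ℝ) * diagonal (fun i => μ i - 1) *
      star (U : Matrix (Fin d) (Fin d) ℝ) := by
    have hd : diagonal (fun i => μ i - 1) = diagonal μ - 1 := by
      rw [← Matrix.diagonal_one, Matrix.diagonal_sub]
    have h2 : (U : Matrix (Fin d) (Fin d) ℝ) * star (U : Matrix (Fin d) (Fin d) ℝ) = 1 := by
      simpa using unitary.coe_mul_star_self U
    rw [hd, Matrix.mul_sub, Matrix.sub_mul, Matrix.mul_one, h2, ← spec]
  have htrM : Matrix.trace M = ∑ i, μ i := by rw [spec, traceConjA]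
  have hEsq : Matrix.trace ((M - 1)ᵀ * (M - 1)) = ∑ i, (μ i - 1)^2 := by
    have hEH : (M - 1)ᵀ = M - 1 := by
      rw [← Matrix.conjTranspose_eq_transpose_of_trivial]
      exact (hM.sub Matrix.isHermitian_one).eq
    rw [hEH, hE, conjMulA, traceConjA]
    simp [pow_two]
  have hSS : S * S = SQ := by
    have hsp := hQ.posSemidef.1.spectral_theorem
    simp only [Unitary.conjStarAlgAut_apply] at hsp
    rw [hSdef, Matrix.PosSemidef.sqrt, conjMulA]
    conv_rhs => rw [hsp]
    congr 2
    congr 1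
    funext i
    simp [Real.mul_self_sqrt (hQ.posSemidef.eigenvalues_nonneg i)]
  have hdS : S.det * S.det = SQ.det := by rw [← Matrix.det_mul, hSS]
  have hdSne : S.det ≠ 0 := by
    intro h0
    have := hQ.det_pos
    rw [← hdS, h0, mul_zero] at this
    exact lt_irrefl _ this
  have hdetM : M.det = SP.det / SQ.det := by
    rw [hMdef, Matrix.det_mul, Matrix.det_mul, Matrix.det_nonsing_inv, ← hdS,
      Ring.inverse_eq_inv']
    field_simp
  have htrQ : Matrix.trace (SQ⁻¹ * SP) = Matrix.trace M := by
    rw [← hSS, Matrix.mul_inv_rev, hMdef, Matrix.trace_mul_cycle S⁻¹ SP S⁻¹]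
  -- the Frobenius norm
  set ε : ℝ := frob (M - 1) with hεdef
  have hε0 : (0:ℝ) ≤ ε := Real.sqrt_nonneg _
  have hε1 : ε < 1 := h
  have hfrob : ε ^ 2 = ∑ i, (μ i - 1)^2 := by
    rw [hεdef, frob, hEsq, Real.sq_sqrt (Finset.sum_nonneg fun i _ => sq_nonneg _)]
  have hxle : ∀ i, |μ i - 1| ≤ ε := by
    intro i
    have h1 : (μ i - 1)^2 ≤ ε^2 := by
      rw [hfrob]
      exact Finset.single_le_sum (f := fun j => (μ j - 1)^2) (fun j _ => sq_nonneg _)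
        (Finset.mem_univ i)
    calc |μ i - 1| = Real.sqrt ((μ i - 1)^2) := (Real.sqrt_sq_eq_abs _).symm
      _ ≤ Real.sqrt (ε^2) := Real.sqrt_le_sqrt h1
      _ = ε := Real.sqrt_sq hε0
  have hxlt : ∀ i, |μ i - 1| < 1 := fun i => lt_of_le_of_lt (hxle i) hε1
  have hμpos : ∀ i, 0 < μ i := by
    intro i
    have := abs_lt.1 (hxlt i)
    linarith [this.1]
  have hdet : M.det = ∏ i, μ i := by simpa using hM.det_eq_prod_eigenvalues
  have hlogdet : Real.log (SQ.det / SP.det) = -∑ i, Real.log (μ i) := by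
    have h1 : SQ.det / SP.det = (M.det)⁻¹ := by rw [hdetM, inv_div]
    rw [h1, Real.log_inv, hdet, Real.log_prod (fun i _ => ne_of_gt (hμpos i))]
  have htr : Matrix.trace (SQ⁻¹ * SP - 1) = ∑ i, (μ i - 1) := by
    rw [Matrix.trace_sub, Matrix.trace_one, htrQ, htrM, Finset.sum_sub_distrib]
    simp
  have key : ∀ i, HasSum (fun n : ℕ => (-(μ i - 1)) ^ (n + 3) / (n + 3))
      ((μ i - 1) - (μ i - 1)^2/2 - Real.log (μ i)) := by
    intro i
    have h1 := log_series' (hxlt i)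
    have e : 1 + (μ i - 1) = μ i := by ring
    rwa [e] at h1
  -- summability facts
  have hsummaj : Summable (fun n : ℕ => ε ^ (n + 3) / ((n : ℝ) + 3)) := by
    refine Summable.of_nonneg_of_le (fun n => by positivity) (fun n => ?_)
      (summable_geometric_of_lt_one hε0 hε1)
    calc ε ^ (n+3) / ((n:ℝ)+3) ≤ ε^(n+3) := by
          apply div_le_self (by positivity)
          push_cast
          linarith [Nat.cast_nonneg (α := ℝ) n]
      _ ≤ ε^n := pow_le_pow_of_le_one hε0 hε1.le (by omega)
  have hsumi : ∀ i, Summable (fun n : ℕ => |μ i - 1| ^ (n + 3) / ((n : ℝ) + 3)) := by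
    intro i
    refine Summable.of_nonneg_of_le (fun n => by positivity) (fun n => ?_)
      (summable_geometric_of_lt_one (abs_nonneg _) (hxlt i))
    calc |μ i - 1| ^ (n+3) / ((n:ℝ)+3) ≤ |μ i - 1|^(n+3) := by
          apply div_le_self (by positivity)
          push_cast
          linarith [Nat.cast_nonneg (α := ℝ) n]
      _ ≤ |μ i - 1|^n := pow_le_pow_of_le_one (abs_nonneg _) (hxlt i).le (by omega)
  have habs : ∀ i, |(μ i - 1) - (μ i - 1)^2/2 - Real.log (μ i)|
      ≤ ∑' n : ℕ, |μ i - 1| ^ (n+3) / ((n:ℝ)+3) := by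
    intro i
    have hfg : (fun n : ℕ => ‖(-(μ i - 1)) ^ (n + 3) / ((n:ℝ) + 3)‖)
        = fun n : ℕ => |μ i - 1| ^ (n+3) / ((n:ℝ)+3) := by
      funext n
      rw [Real.norm_eq_abs, abs_div, abs_pow, abs_neg, abs_of_pos (by positivity : (0:ℝ) < (n:ℝ)+3)]
    rw [← (key i).tsum_eq, ← Real.norm_eq_abs, ← hfg]
    exact norm_tsum_le_tsum_norm (by rw [hfg]; exact hsumi i)
  have hterm : ∀ n : ℕ, ∑ i, |μ i - 1| ^ (n+3) ≤ ε^(n+3) := by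
    intro n
    calc ∑ i, |μ i - 1|^(n+3) = ∑ i, |μ i - 1|^(n+1) * (μ i - 1)^2 := by
          refine Finset.sum_congr rfl fun i _ => ?_
          rw [← sq_abs]
          ring
      _ ≤ ∑ i, ε^(n+1) * (μ i - 1)^2 := Finset.sum_le_sum fun i _ =>
          mul_le_mul_of_nonneg_right (pow_le_pow_left₀ (abs_nonneg _) (hxle i) _) (sq_nonneg _)
      _ = ε^(n+1) * ∑ i, (μ i - 1)^2 := by rw [Finset.mul_sum]
      _ = ε^(n+3) := by rw [← hfrob]; ring
  have htermdiv : ∀ n : ℕ, ∑ i, |μ i - 1| ^ (n+3) / ((n:ℝ)+3) ≤ ε^(n+3) / ((n:ℝ)+3) := by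
    intro n
    rw [← Finset.sum_div]
    have h3 : (0:ℝ) < (n:ℝ)+3 := by positivity
    exact (div_le_div_iff_of_pos_right h3).2 (hterm n)
  refine ⟨∑ i, (1/2 : ℝ) * ((μ i - 1) - (μ i - 1)^2/2 - Real.log (μ i)), ?_, ?_⟩
  · rw [hlogdet, htr, hfrob, mul_neg, Finset.mul_sum, Finset.mul_sum, Finset.mul_sum,
      ← Finset.sum_neg_distrib, ← Finset.sum_add_distrib, ← Finset.sum_add_distrib]
    exact Finset.sum_congr rfl fun i _ => by ring
  · have hsumsum : Summable (fun n : ℕ => ∑ i, |μ i - 1| ^ (n+3) / ((n:ℝ)+3)) :=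
      summable_sum (fun i _ => hsumi i)
    calc |∑ i, (1/2 : ℝ) * ((μ i - 1) - (μ i - 1)^2/2 - Real.log (μ i))|
        ≤ ∑ i, |(1/2 : ℝ) * ((μ i - 1) - (μ i - 1)^2/2 - Real.log (μ i))| :=
          Finset.abs_sum_le_sum_abs _ _
      _ = ∑ i, (1/2 : ℝ) * |(μ i - 1) - (μ i - 1)^2/2 - Real.log (μ i)| := by
          refine Finset.sum_congr rfl fun i _ => ?_
          rw [abs_mul]
          norm_num
      _ ≤ ∑ i, (1/2 : ℝ) * ∑' n : ℕ, |μ i - 1| ^ (n+3) / ((n:ℝ)+3) :=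
          Finset.sum_le_sum fun i _ => mul_le_mul_of_nonneg_left (habs i) (by norm_num)
      _ = (1/2 : ℝ) * ∑ i, ∑' n : ℕ, |μ i - 1| ^ (n+3) / ((n:ℝ)+3) := by
          rw [Finset.mul_sum]
      _ = (1/2 : ℝ) * ∑' n : ℕ, ∑ i, |μ i - 1| ^ (n+3) / ((n:ℝ)+3) := by
          rw [Summable.tsum_finsetSum (fun i _ => hsumi i)]
      _ ≤ (1/2 : ℝ) * ∑' n : ℕ, ε^(n+3) / ((n:ℝ)+3) :=
          mul_le_mul_of_nonneg_left (Summable.tsum_le_tsum htermdiv hsumsum hsummaj) (by norm_num)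
      _ ≤ ∑' n : ℕ, ε^(n+3) / ((n:ℝ)+3) := by
          have h0 : (0:ℝ) ≤ ∑' n : ℕ, ε^(n+3) / ((n:ℝ)+3) :=
            tsum_nonneg fun n => by positivity
          linarith
end

section
/- Define D₂(P,Q) = ‖μ_P−μ_Q‖_{Σ_Q^{-1}} + ‖μ_P−μ_Q‖_{Σ_P^{-1}}. Suppose all terms of D(P,Q) and D(Q,K) are at most ε (in particular ‖Σ_K^{-1/2}Σ_QΣ_K^{-1/2}−I‖_F ≤ ε, ‖Σ_P^{-1/2}Σ_QΣ_P^{-1/2}−I‖_F ≤ ε, ‖μ_P−μ_Q‖_{Σ_Q^{-1}} ≤ ε, ‖μ_Q−μ_K‖_{Σ_Q^{-1}} ≤ ε). Then D₂(P,K) ≤ D₂(P,Q) + D₂(Q,K) + 2ε + 2ε√(1+ε). -/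
open Matrix MeasureTheory

/-- Elliptic norm `‖x‖_A = √(xᵀ A x)`. -/
noncomputable def enorm' {d : ℕ} (A : Matrix (Fin d) (Fin d) ℝ) (x : Fin d → ℝ) : ℝ :=
  Real.sqrt (x ⬝ᵥ A.mulVec x)

/-- `D₂(P,Q) = ‖μ_P − μ_Q‖_{Σ_Q⁻¹} + ‖μ_P − μ_Q‖_{Σ_P⁻¹}`. -/
noncomputable def D2 {d : ℕ} (μP μQ : Fin d → ℝ) (SP SQ : Matrix (Fin d) (Fin d) ℝ) : ℝ :=
  enorm' SQ⁻¹ (μP - μQ) + enorm' SP⁻¹ (μP - μQ)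

open scoped ComplexOrder in
lemma Matrix.PosSemidef.sqrt_mul_self {n : Type*} [Fintype n] [DecidableEq n] {𝕜 : Type*}
    [RCLike 𝕜] {A : Matrix n n 𝕜} (hA : A.PosSemidef) : hA.sqrt * hA.sqrt = A := by
  conv_rhs => rw [hA.1.spectral_theorem, Unitary.conjStarAlgAut_apply]
  have hU : (star hA.1.eigenvectorUnitary : Matrix n n 𝕜) * hA.1.eigenvectorUnitary = 1 :=
    Unitary.coe_star_mul_self _
  rw [Matrix.PosSemidef.sqrt, show ∀ a b c e f g : Matrix n n 𝕜,
    a * b * c * (e * f * g) = a * b * (c * e) * f * g from by intros; simp only [Matrix.mul_assoc],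
    hU, Matrix.mul_one, Matrix.mul_assoc (hA.1.eigenvectorUnitary : Matrix n n 𝕜), diagonal_mul_diagonal]
  congr 2
  refine congrArg diagonal (funext fun i => ?_)
  simp only [Function.comp]
  rw [← RCLike.ofReal_mul, Real.mul_self_sqrt (hA.eigenvalues_nonneg i)]

open scoped ComplexOrder in
lemma Matrix.PosSemidef.posSemidef_sqrt {n : Type*} [Fintype n] [DecidableEq n] {𝕜 : Type*}
    [RCLike 𝕜] {A : Matrix n n 𝕜} (hA : A.PosSemidef) : hA.sqrt.PosSemidef := by
  have hD : (diagonal (((↑) ∘ (√·) ∘ hA.1.eigenvalues) : n → 𝕜)).PosSemidef := by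
    rw [posSemidef_diagonal_iff]
    intro i
    simp only [Function.comp]
    exact_mod_cast Real.sqrt_nonneg _
  have := hD.mul_mul_conjTranspose_same (hA.1.eigenvectorUnitary : Matrix n n 𝕜)
  rw [Matrix.PosSemidef.sqrt, star_eq_conjTranspose]
  exact this

section Aux
variable {d : ℕ}

lemma dotCS (a b : Fin d → ℝ) : (a ⬝ᵥ b)^2 ≤ (a ⬝ᵥ a) * (b ⬝ᵥ b) := by
  simpa [dotProduct, sq] using Finset.sum_mul_sq_le_sq_mul_sq Finset.univ a b

lemma dot_nonneg' (a : Fin d → ℝ) : 0 ≤ a ⬝ᵥ a :=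
  Finset.sum_nonneg fun i _ => mul_self_nonneg _

lemma quadCS {A : Matrix (Fin d) (Fin d) ℝ} (hA : A.PosSemidef) (u v : Fin d → ℝ) :
    (u ⬝ᵥ A *ᵥ v)^2 ≤ (u ⬝ᵥ A *ᵥ u) * (v ⬝ᵥ A *ᵥ v) := by
  set T := hA.sqrt with hT
  have hTs : Tᵀ = T := by simpa using hA.posSemidef_sqrt.1.eq
  have key : ∀ w z : Fin d → ℝ, w ⬝ᵥ A *ᵥ z = (T *ᵥ w) ⬝ᵥ (T *ᵥ z) := by
    intro w z
    rw [← hA.sqrt_mul_self, ← hT, ← Matrix.mulVec_mulVec, Matrix.dotProduct_mulVec,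
      ← Matrix.mulVec_transpose, hTs]
  rw [key u v, key u u, key v v]
  exact dotCS _ _

lemma frob_sq {N : Matrix (Fin d) (Fin d) ℝ} :
    (frob N)^2 = ∑ i, ∑ j, (N i j)^2 := by
  have htr : Matrix.trace (Nᵀ * N) = ∑ j, ∑ i, (N i j)^2 := by
    simp [Matrix.trace, Matrix.mul_apply, Matrix.diag, sq]
  rw [frob, Real.sq_sqrt, htr, Finset.sum_comm]
  rw [htr]
  exact Finset.sum_nonneg fun j _ => Finset.sum_nonneg fun i _ => sq_nonneg _

lemma quad_le_frob (N : Matrix (Fin d) (Fin d) ℝ) (y : Fin d → ℝ) :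
    y ⬝ᵥ N *ᵥ y ≤ frob N * (y ⬝ᵥ y) := by
  have h1 : (y ⬝ᵥ N *ᵥ y)^2 ≤ (y ⬝ᵥ y) * ((N *ᵥ y) ⬝ᵥ (N *ᵥ y)) := dotCS y (N *ᵥ y)
  have h2 : (N *ᵥ y) ⬝ᵥ (N *ᵥ y) ≤ (frob N)^2 * (y ⬝ᵥ y) := by
    rw [frob_sq, Finset.sum_mul]
    refine Finset.sum_le_sum fun i _ => ?_
    have := Finset.sum_mul_sq_le_sq_mul_sq Finset.univ (fun j => N i j) y
    simpa [dotProduct, Matrix.mulVec, sq] using this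
  have hy : 0 ≤ y ⬝ᵥ y := dot_nonneg' y
  have hfn : 0 ≤ frob N := Real.sqrt_nonneg _
  have h3 : (y ⬝ᵥ N *ᵥ y)^2 ≤ (frob N * (y ⬝ᵥ y))^2 := by
    calc (y ⬝ᵥ N *ᵥ y)^2 ≤ (y ⬝ᵥ y) * ((frob N)^2 * (y ⬝ᵥ y)) :=
          h1.trans (by exact mul_le_mul_of_nonneg_left h2 hy)
      _ = (frob N * (y ⬝ᵥ y))^2 := by ring
  calc y ⬝ᵥ N *ᵥ y ≤ |y ⬝ᵥ N *ᵥ y| := le_abs_self _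
    _ = Real.sqrt ((y ⬝ᵥ N *ᵥ y)^2) := (Real.sqrt_sq_eq_abs _).symm
    _ ≤ Real.sqrt ((frob N * (y ⬝ᵥ y))^2) := Real.sqrt_le_sqrt h3
    _ = frob N * (y ⬝ᵥ y) := Real.sqrt_sq (mul_nonneg hfn hy)

lemma dot_adj (T : Matrix (Fin d) (Fin d) ℝ) (u w : Fin d → ℝ) :
    (T *ᵥ u) ⬝ᵥ w = u ⬝ᵥ (Tᵀ *ᵥ w) := by
  rw [Matrix.dotProduct_mulVec, Matrix.vecMul_transpose]

/-- From the Frobenius hypothesis, Loewner-type comparison `A ⪯ (1+ε)B`. -/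
lemma loewner_of_frob {A B : Matrix (Fin d) (Fin d) ℝ} (hB : B.PosDef) {ε : ℝ}
    (h : frob ((hB.posSemidef.sqrt)⁻¹ * A * (hB.posSemidef.sqrt)⁻¹ - 1) ≤ ε)
    (z : Fin d → ℝ) : z ⬝ᵥ A *ᵥ z ≤ (1 + ε) * (z ⬝ᵥ B *ᵥ z) := by
  set S := hB.posSemidef.sqrt with hSdef
  have hSs : Sᵀ = S := by simpa using hB.posSemidef.posSemidef_sqrt.1.eq
  have hSunit : IsUnit S.det := by
    have hd : S.det * S.det = B.det := by
      rw [← Matrix.det_mul, hB.posSemidef.sqrt_mul_self]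
    have : B.det ≠ 0 := hB.det_pos.ne'
    exact isUnit_iff_ne_zero.mpr (fun h0 => this (by rw [← hd, h0, zero_mul]))
  set M := S⁻¹ * A * S⁻¹ with hM
  have key : (S *ᵥ z) ⬝ᵥ M *ᵥ (S *ᵥ z) = z ⬝ᵥ A *ᵥ z := by
    have e1 : M *ᵥ (S *ᵥ z) = S⁻¹ *ᵥ (A *ᵥ z) := by
      rw [Matrix.mulVec_mulVec, hM, Matrix.mul_assoc (S⁻¹ * A),
        Matrix.nonsing_inv_mul _ hSunit, Matrix.mul_one, ← Matrix.mulVec_mulVec]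
    rw [e1, dot_adj, hSs, Matrix.mulVec_mulVec, Matrix.mul_nonsing_inv _ hSunit,
      Matrix.one_mulVec]
  have keyB : (S *ᵥ z) ⬝ᵥ (S *ᵥ z) = z ⬝ᵥ B *ᵥ z := by
    rw [dot_adj, hSs, Matrix.mulVec_mulVec, hB.posSemidef.sqrt_mul_self]
  have hsplit : (S *ᵥ z) ⬝ᵥ M *ᵥ (S *ᵥ z) =
      (S *ᵥ z) ⬝ᵥ (M - 1) *ᵥ (S *ᵥ z) + (S *ᵥ z) ⬝ᵥ (S *ᵥ z) := by
    rw [Matrix.sub_mulVec, dotProduct_sub, Matrix.one_mulVec]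
    ring
  have hb := quad_le_frob (M - 1) (S *ᵥ z)
  have hyy : 0 ≤ (S *ᵥ z) ⬝ᵥ (S *ᵥ z) := dot_nonneg' _
  have hf : frob (M - 1) * ((S *ᵥ z) ⬝ᵥ (S *ᵥ z)) ≤ ε * ((S *ᵥ z) ⬝ᵥ (S *ᵥ z)) :=
    mul_le_mul_of_nonneg_right h hyy
  calc z ⬝ᵥ A *ᵥ z = (S *ᵥ z) ⬝ᵥ (M - 1) *ᵥ (S *ᵥ z) + (S *ᵥ z) ⬝ᵥ (S *ᵥ z) := by
        rw [← key, hsplit]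
    _ ≤ ε * ((S *ᵥ z) ⬝ᵥ (S *ᵥ z)) + (S *ᵥ z) ⬝ᵥ (S *ᵥ z) := by linarith
    _ = (1 + ε) * (z ⬝ᵥ B *ᵥ z) := by rw [← keyB]; ring

/-- Inverse reversal of Loewner order. -/
lemma inv_loewner {A B : Matrix (Fin d) (Fin d) ℝ} (hA : A.PosDef) (hB : B.PosDef)
    {c : ℝ} (hc : 0 ≤ c) (h : ∀ z, z ⬝ᵥ A *ᵥ z ≤ c * (z ⬝ᵥ B *ᵥ z)) (x : Fin d → ℝ) :
    x ⬝ᵥ B⁻¹ *ᵥ x ≤ c * (x ⬝ᵥ A⁻¹ *ᵥ x) := by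
  have hBunit : IsUnit B.det := isUnit_iff_ne_zero.mpr hB.det_pos.ne'
  have hAunit : IsUnit A.det := isUnit_iff_ne_zero.mpr hA.det_pos.ne'
  have ht0 : 0 ≤ x ⬝ᵥ B⁻¹ *ᵥ x := by simpa using hB.inv.posSemidef.dotProduct_mulVec_nonneg x
  have hs0 : 0 ≤ x ⬝ᵥ A⁻¹ *ᵥ x := by simpa using hA.inv.posSemidef.dotProduct_mulVec_nonneg x
  have hBsym : Bᵀ = B := by simpa using hB.isHermitian.eq
  have hBu : B *ᵥ (B⁻¹ *ᵥ x) = x := by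
    rw [Matrix.mulVec_mulVec, Matrix.mul_nonsing_inv _ hBunit, Matrix.one_mulVec]
  have htu : x ⬝ᵥ B⁻¹ *ᵥ x = (B⁻¹ *ᵥ x) ⬝ᵥ B *ᵥ (B⁻¹ *ᵥ x) := by
    rw [hBu, dotProduct_comm]
  have hxA : (B⁻¹ *ᵥ x) ⬝ᵥ x = (B⁻¹ *ᵥ x) ⬝ᵥ A *ᵥ (A⁻¹ *ᵥ x) := by
    rw [Matrix.mulVec_mulVec, Matrix.mul_nonsing_inv _ hAunit, Matrix.one_mulVec]
  have hsA : (A⁻¹ *ᵥ x) ⬝ᵥ A *ᵥ (A⁻¹ *ᵥ x) = x ⬝ᵥ A⁻¹ *ᵥ x := by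
    rw [Matrix.mulVec_mulVec, Matrix.mul_nonsing_inv _ hAunit, Matrix.one_mulVec,
      dotProduct_comm]
  have hux : (B⁻¹ *ᵥ x) ⬝ᵥ x = x ⬝ᵥ B⁻¹ *ᵥ x := dotProduct_comm _ _
  have hcs : (x ⬝ᵥ B⁻¹ *ᵥ x)^2 ≤ ((B⁻¹ *ᵥ x) ⬝ᵥ A *ᵥ (B⁻¹ *ᵥ x)) * (x ⬝ᵥ A⁻¹ *ᵥ x) := by
    rw [← hux, hxA, ← hsA]
    exact quadCS hA.posSemidef _ _
  have huA : (B⁻¹ *ᵥ x) ⬝ᵥ A *ᵥ (B⁻¹ *ᵥ x) ≤ c * (x ⬝ᵥ B⁻¹ *ᵥ x) := by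
    rw [htu]; exact h _
  rcases eq_or_lt_of_le ht0 with h0 | h0
  · rw [← h0]; exact mul_nonneg hc hs0
  · nlinarith

lemma enorm'_nonneg (A : Matrix (Fin d) (Fin d) ℝ) (x : Fin d → ℝ) : 0 ≤ enorm' A x :=
  Real.sqrt_nonneg _

/-- enorm comparison. -/
lemma enorm'_le {A B : Matrix (Fin d) (Fin d) ℝ} (hA : A.PosDef) (hB : B.PosDef) {ε : ℝ}
    (hε : 0 ≤ ε)
    (h : frob ((hB.posSemidef.sqrt)⁻¹ * A * (hB.posSemidef.sqrt)⁻¹ - 1) ≤ ε)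
    (x : Fin d → ℝ) : enorm' B⁻¹ x ≤ Real.sqrt (1 + ε) * enorm' A⁻¹ x := by
  have key := inv_loewner hA hB (by linarith) (loewner_of_frob hB h) x
  rw [enorm', enorm', ← Real.sqrt_mul (by linarith)]
  exact Real.sqrt_le_sqrt key

/-- Triangle inequality for the elliptic (semi)norm. -/
lemma enorm'_triangle {A : Matrix (Fin d) (Fin d) ℝ} (hA : A.PosSemidef) (x y : Fin d → ℝ) :
    enorm' A (x + y) ≤ enorm' A x + enorm' A y := by
  have hx : 0 ≤ x ⬝ᵥ A *ᵥ x := by simpa using hA.dotProduct_mulVec_nonneg x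
  have hy : 0 ≤ y ⬝ᵥ A *ᵥ y := by simpa using hA.dotProduct_mulVec_nonneg y
  have hcs : x ⬝ᵥ A *ᵥ y ≤ Real.sqrt (x ⬝ᵥ A *ᵥ x) * Real.sqrt (y ⬝ᵥ A *ᵥ y) := by
    have h1 := quadCS hA x y
    calc x ⬝ᵥ A *ᵥ y ≤ |x ⬝ᵥ A *ᵥ y| := le_abs_self _
      _ = Real.sqrt ((x ⬝ᵥ A *ᵥ y)^2) := (Real.sqrt_sq_eq_abs _).symm
      _ ≤ Real.sqrt ((x ⬝ᵥ A *ᵥ x) * (y ⬝ᵥ A *ᵥ y)) := Real.sqrt_le_sqrt h1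
      _ = _ := Real.sqrt_mul hx _
  have hexp : (x + y) ⬝ᵥ A *ᵥ (x + y) = x ⬝ᵥ A *ᵥ x + 2 * (x ⬝ᵥ A *ᵥ y) + y ⬝ᵥ A *ᵥ y := by
    have hAsym : Aᵀ = A := by simpa using hA.1.eq
    have hyx : y ⬝ᵥ A *ᵥ x = x ⬝ᵥ A *ᵥ y := by
      rw [Matrix.dotProduct_mulVec, ← Matrix.mulVec_transpose, hAsym, dotProduct_comm]
    rw [Matrix.mulVec_add, dotProduct_add, add_dotProduct,
      add_dotProduct, hyx]
    ring
  rw [enorm', enorm', enorm', hexp]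
  have hsx := Real.sqrt_nonneg (x ⬝ᵥ A *ᵥ x)
  have hsy := Real.sqrt_nonneg (y ⬝ᵥ A *ᵥ y)
  have h2 : x ⬝ᵥ A *ᵥ x + 2 * (x ⬝ᵥ A *ᵥ y) + y ⬝ᵥ A *ᵥ y ≤
      (Real.sqrt (x ⬝ᵥ A *ᵥ x) + Real.sqrt (y ⬝ᵥ A *ᵥ y))^2 := by
    have e1 : Real.sqrt (x ⬝ᵥ A *ᵥ x)^2 = x ⬝ᵥ A *ᵥ x := Real.sq_sqrt hx
    have e2 : Real.sqrt (y ⬝ᵥ A *ᵥ y)^2 = y ⬝ᵥ A *ᵥ y := Real.sq_sqrt hy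
    nlinarith
  calc Real.sqrt (x ⬝ᵥ A *ᵥ x + 2 * (x ⬝ᵥ A *ᵥ y) + y ⬝ᵥ A *ᵥ y)
      ≤ Real.sqrt ((Real.sqrt (x ⬝ᵥ A *ᵥ x) + Real.sqrt (y ⬝ᵥ A *ᵥ y))^2) :=
        Real.sqrt_le_sqrt h2
    _ = _ := Real.sqrt_sq (by positivity)

end Aux

theorem stmt14 {d : ℕ} (μP μQ μK : Fin d → ℝ)
    {SP SQ SK : Matrix (Fin d) (Fin d) ℝ}
    (hP : SP.PosDef) (hQ : SQ.PosDef) (hK : SK.PosDef) (ε : ℝ)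
    (h1 : frob ((hQ.posSemidef.sqrt)⁻¹ * SP * (hQ.posSemidef.sqrt)⁻¹ - 1) ≤ ε)
    (h2 : frob ((hP.posSemidef.sqrt)⁻¹ * SQ * (hP.posSemidef.sqrt)⁻¹ - 1) ≤ ε)
    (h3 : frob ((hK.posSemidef.sqrt)⁻¹ * SQ * (hK.posSemidef.sqrt)⁻¹ - 1) ≤ ε)
    (h4 : frob ((hQ.posSemidef.sqrt)⁻¹ * SK * (hQ.posSemidef.sqrt)⁻¹ - 1) ≤ ε)
    (h5 : enorm' SQ⁻¹ (μP - μQ) ≤ ε) (h6 : enorm' SP⁻¹ (μP - μQ) ≤ ε)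
    (h7 : enorm' SK⁻¹ (μQ - μK) ≤ ε) (h8 : enorm' SQ⁻¹ (μQ - μK) ≤ ε) :
    D2 μP μK SP SK ≤ D2 μP μQ SP SQ + D2 μQ μK SQ SK
      + 2 * ε + 2 * ε * Real.sqrt (1 + ε) := by
  have hε : 0 ≤ ε := (Real.sqrt_nonneg _).trans h1
  have hs : 0 ≤ Real.sqrt (1 + ε) := Real.sqrt_nonneg _
  have hPQ_K : enorm' SK⁻¹ (μP - μQ) ≤ Real.sqrt (1 + ε) * ε :=
    (enorm'_le hQ hK hε h3 (μP - μQ)).trans (by nlinarith)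
  have hQK_P : enorm' SP⁻¹ (μQ - μK) ≤ Real.sqrt (1 + ε) * ε :=
    (enorm'_le hQ hP hε h2 (μQ - μK)).trans (by nlinarith)
  have tK := enorm'_triangle (hK.inv.posSemidef) (μP - μQ) (μQ - μK)
  have tP := enorm'_triangle (hP.inv.posSemidef) (μP - μQ) (μQ - μK)
  rw [sub_add_sub_cancel] at tK tP
  have n1 := enorm'_nonneg SQ⁻¹ (μP - μQ)
  have n2 := enorm'_nonneg SQ⁻¹ (μQ - μK)
  simp only [D2] at *
  linarith
end
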